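/- Let P and Q be a version pair with edit set δ, and let θ and θ′ be decompositions of the pair with θ contained in θ′. If every covering window in θ is equivalent, then every covering window in θ′ is also equivalent (and hence the version pair is equivalent). -/
import Mathlib

theorem decomposition_containment_preserves_equivalence
    {V : Type*} (θ θ' : Set (Set V)) (edits : Set V)
    (equivWin : Set V → Prop) (pairEquiv : Prop)
    -- θ is a decomposition (a partition of the operator set)
    (hθ_ne : ∀ b ∈ θ, b.Nonempty)
    (hθ_disj : ∀ b ∈ θ, ∀ c ∈ θ, b ≠ c → Disjoint b c)
    (hθ_cov : ⋃₀ θ = Set.univ)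
    -- θ' is a decomposition (a partition of the operator set)
    (hθ'_ne : ∀ b ∈ θ', b.Nonempty)
    (hθ'_disj : ∀ b ∈ θ', ∀ c ∈ θ', b ≠ c → Disjoint b c)
    (hθ'_cov : ⋃₀ θ' = Set.univ)
    -- θ is contained in θ'
    (hcont : ∀ b ∈ θ, ∃ b' ∈ θ', b ⊆ b')
    -- window containment preserves equivalence (Lemma 2)
    (hmono : ∀ s t : Set V, s ⊆ t → equivWin s → equivWin t)
    -- every covering window of θ is equivalent
    (hθ_equiv : ∀ b ∈ θ, (∃ e ∈ edits, e ∈ b) → equivWin b)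
    -- decomposition lemma (Lemma 3): all covering windows equivalent ⇒ pair equivalent
    (hlemma : (∀ b' ∈ θ', (∃ e ∈ edits, e ∈ b') → equivWin b') → pairEquiv) :
    (∀ b' ∈ θ', (∃ e ∈ edits, e ∈ b') → equivWin b') ∧ pairEquiv := by
  have key : ∀ b' ∈ θ', (∃ e ∈ edits, e ∈ b') → equivWin b' := by
    rintro b' hb' ⟨e, he, heb'⟩
    have : e ∈ ⋃₀ θ := by rw [hθ_cov]; trivial
    obtain ⟨b, hb, heb⟩ := this
    obtain ⟨b'', hb'', hsub⟩ := hcont b hb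
    have : b'' = b' := by
      by_contra hne
      exact (hθ'_disj b'' hb'' b' hb' hne).ne_of_mem (hsub heb) heb' rfl
    exact hmono b b' (this ▸ hsub) (hθ_equiv b hb ⟨e, he, heb⟩)
  exact ⟨key, hlemma key⟩
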